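/- Let G act freely and properly on a manifold P, and let π, π_B be G-invariant bivector fields on P that are gauge related by a basic 2-form B (i.e., B = ρ*B_red for the orbit projection ρ: P → P/G and a 2-form B_red on P/G). Then the reduced bivectors π_red and π_red^B on P/G, defined by Tρ∘π♯∘ρ* = π_red♯ and Tρ∘π_B♯∘ρ* = (π_red^B)♯, are gauge related by B_red. -/
import Mathlib


/-- Let `G` act freely and properly on `P` and let `π, π_B` be
`G`-invariant bivector fields on `P`, gauge related by a *basic* 2-form
`B = ρ*B_red`.  Then the reduced bivectors `π_red, π_red^B` on `P/G`
(defined by `Tρ ∘ π♯ ∘ ρ* = π_red♯` etc.) are gauge related by `B_red`.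
Encoding: `O`/`Or` are the spaces of 1-forms on `P` and on `P/G`, `V`/`Vr`
the vector fields, `Tρ` the (surjective) pushforward, `ρstar` the (injective)
pullback of 1-forms, `Bflat`/`Bredflat` the flat maps of `B` and `B_red`;
basicness is `B♭ = ρ* ∘ B_red♭ ∘ Tρ`; invariance of `π, π_B` is encoded by
the existence of the reduced maps `Pred, PBred` satisfying `hred, hredB`.
Conclusion: `Id + B_red♭∘π_red♯` is invertible and
`π_red^B♯ ∘ (Id + B_red♭∘π_red♯) = π_red♯`. -/
theorem stmt12 {O V Or Vr : Type*}
    [AddCommGroup O] [Module ℝ O] [AddCommGroup V] [Module ℝ V]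
    [AddCommGroup Or] [Module ℝ Or] [AddCommGroup Vr] [Module ℝ Vr]
    (P PB : O →ₗ[ℝ] V) (Pred PBred : Or →ₗ[ℝ] Vr)
    (Tρ : V →ₗ[ℝ] Vr) (hTρsurj : Function.Surjective Tρ)
    (ρstar : Or →ₗ[ℝ] O) (hρstarinj : Function.Injective ρstar)
    (Bflat : V →ₗ[ℝ] O) (Bredflat : Vr →ₗ[ℝ] Or)
    (hred : ∀ α, Tρ (P (ρstar α)) = Pred α)
    (hredB : ∀ α, Tρ (PB (ρstar α)) = PBred α)
    (hbasic : ∀ X : V, Bflat X = ρstar (Bredflat (Tρ X)))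
    (hbij : Function.Bijective (fun α : O => α + Bflat (P α)))
    (hgauge : ∀ α : O, PB (α + Bflat (P α)) = P α) :
    Function.Bijective (fun α : Or => α + Bredflat (Pred α)) ∧
      ∀ α : Or, PBred (α + Bredflat (Pred α)) = Pred α := by
  have key : ∀ α : Or, ρstar α + Bflat (P (ρstar α)) = ρstar (α + Bredflat (Pred α)) := by
    intro α
    rw [hbasic, hred, map_add]
  have hinj : Function.Injective (fun α : Or => α + Bredflat (Pred α)) := by
    intro a b hab
    apply hρstarinj
    apply hbij.1
    simp only [key]
    exact congrArg ρstar hab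
  refine ⟨⟨hinj, ?_⟩, ?_⟩
  · intro β
    obtain ⟨γ, hγ⟩ := hbij.2 (ρstar β)
    simp only at hγ
    refine ⟨β - Bredflat (Tρ (P γ)), ?_⟩
    have hγeq : ρstar (β - Bredflat (Tρ (P γ))) = γ := by
      rw [map_sub, ← hbasic, ← hγ]; abel
    apply hρstarinj
    simp only
    rw [← key, hγeq, hγ]
  · intro α
    rw [← hredB, ← key, hgauge, hred]
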